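/- arXiv:1011.6528 — 9 statements merged into one kernel-verified Lean document; each statement's English description precedes it below -/
import Mathlib

section
/- Let θ > 0 and define S_θ(z₀,z₁,z₂) = 1 + (z₀+z)/p + θ·z₀(z₀+z)/p² + (1/2−θ)·(z₀+z)²/p², where z = z₁+z₂ and p = (1−θz₁)(1−θz₂). Then |S_θ(0,z₁,z₂)| ≤ 1 for all complex z₁, z₂ with Re z₁ ≤ 0 and Re z₂ ≤ 0 if and only if θ ≥ 1/4. -/
noncomputable def S (θ : ℝ) (z₀ z₁ z₂ : ℂ) : ℂ :=
  let z : ℂ := z₁ + z₂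
  let p : ℂ := (1 - (θ : ℂ) * z₁) * (1 - (θ : ℂ) * z₂)
  1 + (z₀ + z) / p + (θ : ℂ) * (z₀ * (z₀ + z)) / p ^ 2
    + (1 / 2 - (θ : ℂ)) * (z₀ + z) ^ 2 / p ^ 2

noncomputable def Qc (θ : ℝ) (v : ℂ) : ℂ :=
  8 * (θ : ℂ) ^ 2 + 4 * (θ : ℂ) * (v - 1) + (1 - 2 * (θ : ℂ)) * (v - 1) ^ 2

lemma S_eq_Q (θ : ℝ) (hθ : (θ : ℂ) ≠ 0) (z₁ z₂ : ℂ)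
    (h1 : (1 - (θ : ℂ) * z₁) ≠ 0) (h2 : (1 - (θ : ℂ) * z₂) ≠ 0) :
    S θ 0 z₁ z₂ = Qc θ ((1 + (θ : ℂ) * z₁) * (1 + (θ : ℂ) * z₂) /
      ((1 - (θ : ℂ) * z₁) * (1 - (θ : ℂ) * z₂))) / (8 * (θ : ℂ) ^ 2) := by
  simp only [S, Qc]
  have h1' : 1 - z₁ * (θ : ℂ) ≠ 0 := by rwa [mul_comm]
  have h2' : 1 - z₂ * (θ : ℂ) ≠ 0 := by rwa [mul_comm]
  field_simp
  ring

lemma normSq_Qc (θ : ℝ) (v : ℂ) :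
    Complex.normSq (Qc θ v) =
      (8 * θ ^ 2 + 4 * θ * (v.re - 1) + (1 - 2 * θ) * ((v.re - 1) ^ 2 - v.im ^ 2)) ^ 2
        + (4 * θ * v.im + 2 * (1 - 2 * θ) * (v.re - 1) * v.im) ^ 2 := by
  simp only [Qc, Complex.normSq_apply, pow_two]
  simp [Complex.add_re, Complex.add_im, Complex.mul_re, Complex.mul_im, Complex.sub_re,
    Complex.sub_im, Complex.one_re, Complex.one_im, Complex.ofReal_re, Complex.ofReal_im]
  ring

lemma key_real (θ a b : ℝ) (hθ : 1 / 4 ≤ θ) (hab : a ^ 2 + b ^ 2 ≤ 1) :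
    (8 * θ ^ 2 + 4 * θ * (a - 1) + (1 - 2 * θ) * ((a - 1) ^ 2 - b ^ 2)) ^ 2
      + (4 * θ * b + 2 * (1 - 2 * θ) * (a - 1) * b) ^ 2 ≤ 64 * θ ^ 4 := by
  have h8 : (0 : ℝ) ≤ 8 * θ - 1 := by linarith
  have hH : 0 ≤ (1 - 2 * θ) ^ 2 * b ^ 2 + ((1 - 2 * θ) * (a - 1) + (6 * θ - 1)) ^ 2
      + (2 * θ - 1) ^ 2 * (8 * θ - 1) := by
    have := mul_nonneg (sq_nonneg (2 * θ - 1)) h8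
    positivity
  have hident : (8 * θ ^ 2 + 4 * θ * (a - 1) + (1 - 2 * θ) * ((a - 1) ^ 2 - b ^ 2)) ^ 2
      + (4 * θ * b + 2 * (1 - 2 * θ) * (a - 1) * b) ^ 2 - 64 * θ ^ 4
      = -(4 * (a - 1) ^ 2 * (2 * θ - 1) ^ 2 * (4 * θ - 1))
        + ((a ^ 2 + b ^ 2) - 1) * ((1 - 2 * θ) ^ 2 * b ^ 2
          + ((1 - 2 * θ) * (a - 1) + (6 * θ - 1)) ^ 2
          + (2 * θ - 1) ^ 2 * (8 * θ - 1)) := by ring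
  have h3 : ((a ^ 2 + b ^ 2) - 1) * ((1 - 2 * θ) ^ 2 * b ^ 2
      + ((1 - 2 * θ) * (a - 1) + (6 * θ - 1)) ^ 2
      + (2 * θ - 1) ^ 2 * (8 * θ - 1)) ≤ 0 :=
    mul_nonpos_of_nonpos_of_nonneg (by linarith) hH
  have h4 : 0 ≤ 4 * (a - 1) ^ 2 * (2 * θ - 1) ^ 2 * (4 * θ - 1) := by
    have h41 : (0 : ℝ) ≤ 4 * θ - 1 := by linarith
    positivity
  linarith

theorem stmt0 (θ : ℝ) (hθ : 0 < θ) :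
    (∀ z₁ z₂ : ℂ, z₁.re ≤ 0 → z₂.re ≤ 0 → ‖S θ 0 z₁ z₂‖ ≤ 1)
      ↔ θ ≥ 1 / 4 := by
  have hθC : (θ : ℂ) ≠ 0 := Complex.ofReal_ne_zero.2 (ne_of_gt hθ)
  constructor
  · intro hall
    by_contra hlt
    push_neg at hlt
    have h1 : (Complex.I / (θ : ℂ)).re ≤ 0 := by
      simp [Complex.div_re]
    have h2 : ((0 : ℂ)).re ≤ 0 := by simp
    have habs := hall (Complex.I / θ) 0 h1 h2
    have hd1 : (1 - (θ : ℂ) * (Complex.I / θ)) ≠ 0 := by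
      have : (θ : ℂ) * (Complex.I / θ) = Complex.I := by field_simp
      rw [this]
      intro h
      have := congrArg Complex.im h
      simp at this
    have hd2 : (1 - (θ : ℂ) * 0) ≠ 0 := by simp
    have hv : (1 + (θ : ℂ) * (Complex.I / θ)) * (1 + (θ : ℂ) * 0) /
        ((1 - (θ : ℂ) * (Complex.I / θ)) * (1 - (θ : ℂ) * 0)) = Complex.I := by
      have hI : (θ : ℂ) * (Complex.I / θ) = Complex.I := by field_simp
      rw [hI]
      have : (1 : ℂ) - Complex.I ≠ 0 := by
        intro h
        have := congrArg Complex.im h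
        simp at this
      field_simp
      linear_combination Complex.I_sq
    have hS := S_eq_Q θ hθC (Complex.I / θ) 0 hd1 hd2
    rw [hv] at hS
    have hnormQ : Complex.normSq (Qc θ Complex.I) = 16 * θ ^ 2 * (2 * θ - 1) ^ 2
        + 4 * (4 * θ - 1) ^ 2 := by
      rw [normSq_Qc]
      simp
      ring
    have hgt : 64 * θ ^ 4 < Complex.normSq (Qc θ Complex.I) := by
      rw [hnormQ]
      nlinarith [sq_nonneg (2 * θ - 1), sq_nonneg θ, mul_pos hθ hθ,
        mul_pos (mul_pos hθ hθ) hθ, sq_nonneg (4 * θ - 1)]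
    have hle : Complex.normSq (S θ 0 (Complex.I / θ) 0) ≤ 1 := by
      rw [← Complex.sq_norm]
      nlinarith [norm_nonneg (S θ 0 (Complex.I / θ) 0)]
    rw [hS, Complex.normSq_div] at hle
    have hden : Complex.normSq (8 * (θ : ℂ) ^ 2) = 64 * θ ^ 4 := by
      have : (8 * (θ : ℂ) ^ 2) = ((8 * θ ^ 2 : ℝ) : ℂ) := by push_cast; ring
      rw [this, Complex.normSq_ofReal]
      ring
    rw [hden] at hle
    have hdenpos : (0 : ℝ) < 64 * θ ^ 4 := by positivity
    rw [div_le_one hdenpos] at hle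
    linarith
  · intro hθ4 z₁ z₂ h1 h2
    have hd1 : (1 - (θ : ℂ) * z₁) ≠ 0 := by
      intro h
      have := congrArg Complex.re h
      simp [Complex.sub_re, Complex.mul_re] at this
      nlinarith [mul_nonpos_of_nonneg_of_nonpos (le_of_lt hθ) h1]
    have hd2 : (1 - (θ : ℂ) * z₂) ≠ 0 := by
      intro h
      have := congrArg Complex.re h
      simp [Complex.sub_re, Complex.mul_re] at this
      nlinarith [mul_nonpos_of_nonneg_of_nonpos (le_of_lt hθ) h2]
    set v : ℂ := (1 + (θ : ℂ) * z₁) * (1 + (θ : ℂ) * z₂) /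
      ((1 - (θ : ℂ) * z₁) * (1 - (θ : ℂ) * z₂)) with hvdef
    have hnum1 : Complex.normSq (1 + (θ : ℂ) * z₁) ≤ Complex.normSq (1 - (θ : ℂ) * z₁) := by
      simp only [Complex.normSq_apply, Complex.add_re, Complex.add_im, Complex.sub_re,
        Complex.sub_im, Complex.one_re, Complex.one_im, Complex.mul_re, Complex.mul_im,
        Complex.ofReal_re, Complex.ofReal_im]
      nlinarith [mul_nonpos_of_nonneg_of_nonpos (le_of_lt hθ) h1]
    have hnum2 : Complex.normSq (1 + (θ : ℂ) * z₂) ≤ Complex.normSq (1 - (θ : ℂ) * z₂) := by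
      simp only [Complex.normSq_apply, Complex.add_re, Complex.add_im, Complex.sub_re,
        Complex.sub_im, Complex.one_re, Complex.one_im, Complex.mul_re, Complex.mul_im,
        Complex.ofReal_re, Complex.ofReal_im]
      nlinarith [mul_nonpos_of_nonneg_of_nonpos (le_of_lt hθ) h2]
    have hvle : Complex.normSq v ≤ 1 := by
      rw [hvdef, Complex.normSq_div, Complex.normSq_mul, Complex.normSq_mul]
      have hp1 : 0 < Complex.normSq (1 - (θ : ℂ) * z₁) := Complex.normSq_pos.2 hd1
      have hp2 : 0 < Complex.normSq (1 - (θ : ℂ) * z₂) := Complex.normSq_pos.2 hd2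
      rw [div_le_one (mul_pos hp1 hp2)]
      exact mul_le_mul hnum1 hnum2 (Complex.normSq_nonneg _) (le_of_lt hp1)
    have hab : v.re ^ 2 + v.im ^ 2 ≤ 1 := by
      have : Complex.normSq v = v.re ^ 2 + v.im ^ 2 := by
        simp [Complex.normSq_apply]; ring
      linarith [this ▸ hvle]
    have hS := S_eq_Q θ hθC z₁ z₂ hd1 hd2
    rw [← hvdef] at hS
    have hQle : Complex.normSq (Qc θ v) ≤ 64 * θ ^ 4 := by
      rw [normSq_Qc]
      exact key_real θ v.re v.im hθ4 hab
    have hden : Complex.normSq (8 * (θ : ℂ) ^ 2) = 64 * θ ^ 4 := by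
      have : (8 * (θ : ℂ) ^ 2) = ((8 * θ ^ 2 : ℝ) : ℂ) := by push_cast; ring
      rw [this, Complex.normSq_ofReal]
      ring
    have hnS : Complex.normSq (S θ 0 z₁ z₂) ≤ 1 := by
      rw [hS, Complex.normSq_div, hden]
      rw [div_le_one (by positivity)]
      exact hQle
    rw [← Complex.sq_norm] at hnS
    nlinarith [norm_nonneg (S θ 0 z₁ z₂)]
end

section
/- Let θ > 0 and define S_θ(z₀,z₁,z₂) = 1 + (z₀+z)/p + θ·z₀(z₀+z)/p² + (1/2−θ)·(z₀+z)²/p² with z = z₁+z₂, p = (1−θz₁)(1−θz₂). With η = 1+i and real a → 0⁻, the squared modulus satisfies |S_θ(−2a, aη, aη)|² = 1 + (40θ² − 16θ)a³ + O(a⁴). -/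
set_option maxHeartbeats 1000000


lemma S_eq (θ : ℝ) (z₀ z₁ z₂ : ℂ) :
    S θ z₀ z₁ z₂ = 1 + (z₀ + (z₁ + z₂)) / ((1 - (θ : ℂ) * z₁) * (1 - (θ : ℂ) * z₂))
      + (θ : ℂ) * (z₀ * (z₀ + (z₁ + z₂))) / ((1 - (θ : ℂ) * z₁) * (1 - (θ : ℂ) * z₂)) ^ 2
      + (1 / 2 - (θ : ℂ)) * (z₀ + (z₁ + z₂)) ^ 2 / ((1 - (θ : ℂ) * z₁) * (1 - (θ : ℂ) * z₂)) ^ 2 := rfl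

lemma aux (θ : ℝ) (hθ : 0 < θ) (a : ℝ) (ha1 : -1 < a) (ha0 : a < 0) :
    |‖S θ (-2 * a) (a * (1 + Complex.I)) (a * (1 + Complex.I))‖ ^ 2
        - (1 + (40 * θ ^ 2 - 16 * θ) * a ^ 3)| ≤
      (4 + 32*θ + 16*θ^2 + 544*θ^3 + 2272*θ^4 + 5248*θ^5 + 7968*θ^6 + 8448*θ^7
        + 6144*θ^8 + 2816*θ^9 + 640*θ^10) * a ^ 4 := by
  have hpmns : Complex.normSq (1 - (θ:ℂ) * ((a:ℂ) * (1 + Complex.I)))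
      = (1 - θ*a)^2 + (θ*a)^2 := by
    have h : (1 - (θ:ℂ) * ((a:ℂ) * (1 + Complex.I)))
        = ((1 - θ*a : ℝ) : ℂ) + ((-(θ*a) : ℝ) : ℂ) * Complex.I := by push_cast; ring
    rw [h, Complex.normSq_add_mul_I]; ring
  have hta : 0 < θ * (-a) := mul_pos hθ (by linarith)
  have hnsq1 : 1 ≤ (1 - θ*a)^2 + (θ*a)^2 := by nlinarith [sq_nonneg (θ*a)]
  have hpm : (1 - (θ:ℂ) * ((a:ℂ) * (1 + Complex.I))) ≠ 0 := by
    intro h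
    have h0 : Complex.normSq (1 - (θ:ℂ) * ((a:ℂ) * (1 + Complex.I))) = 0 := by
      rw [h, map_zero]
    rw [hpmns] at h0; nlinarith
  set pm : ℂ := 1 - (θ:ℂ) * ((a:ℂ) * (1 + Complex.I)) with hpmdef
  set w : ℂ := (-2 * (a:ℂ)) + ((a:ℂ) * (1 + Complex.I) + (a:ℂ) * (1 + Complex.I)) with hwdef
  set Nc : ℂ := pm^4 + w * pm^2 + (θ:ℂ) * ((-2 * (a:ℂ)) * w) + (1/2 - (θ:ℂ)) * w^2 with hNcdef
  have hS : S θ (-2 * a) ((a:ℂ) * (1 + Complex.I)) ((a:ℂ) * (1 + Complex.I)) = Nc / pm^4 := by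
    rw [S_eq, hNcdef, hwdef]
    push_cast
    rw [← hpmdef]
    field_simp
  have hNc : Nc = ((1 - 4*a*θ - 2*a^2 + 8*a^2*θ - 4*a^3*θ^2 + 8*a^3*θ^3 - 4*a^4*θ^4 : ℝ) : ℂ)
      + ((2*a - 4*a*θ - 8*a^2*θ + 12*a^2*θ^2 - 8*a^3*θ^3 : ℝ) : ℂ) * Complex.I := by
    rw [hNcdef, hwdef, hpmdef]
    push_cast
    linear_combination ((2:ℂ)*(a:ℂ)^2 + (-8:ℂ)*(a:ℂ)^2*(θ:ℂ) + (6:ℂ)*(a:ℂ)^2*(θ:ℂ)^2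
      + (4:ℂ)*(a:ℂ)^3*(θ:ℂ)^2 + (2:ℂ)*(a:ℂ)^3*(θ:ℂ)^2*Complex.I
      + (-12:ℂ)*(a:ℂ)^3*(θ:ℂ)^3 + (-4:ℂ)*(a:ℂ)^3*(θ:ℂ)^3*Complex.I
      + (5:ℂ)*(a:ℂ)^4*(θ:ℂ)^4 + (4:ℂ)*(a:ℂ)^4*(θ:ℂ)^4*Complex.I
      + (1:ℂ)*(a:ℂ)^4*(θ:ℂ)^4*Complex.I^2) * Complex.I_sq
  set X : ℝ := 1 - 4*a*θ - 2*a^2 + 8*a^2*θ - 4*a^3*θ^2 + 8*a^3*θ^3 - 4*a^4*θ^4 with hX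
  set Y : ℝ := 2*a - 4*a*θ - 8*a^2*θ + 12*a^2*θ^2 - 8*a^3*θ^3 with hY
  set D : ℝ := ((1 - θ*a)^2 + (θ*a)^2)^4 with hD
  have habs : ‖S θ (-2 * a) ((a:ℂ) * (1 + Complex.I)) ((a:ℂ) * (1 + Complex.I))‖ ^ 2
      = (X^2 + Y^2) / D := by
    rw [hS, Complex.sq_norm, map_div₀, map_pow, hpmns, hNc, Complex.normSq_add_mul_I, hD]
  rw [habs]
  have hD1 : (1:ℝ) ≤ D := one_le_pow₀ hnsq1
  have hD0 : (0:ℝ) < D := by linarith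
  set Q : ℝ := 4 - 32*θ + 128*θ^3 + 16*a*θ^2 + 416*a*θ^3 - 1024*a*θ^4 - 1248*a^2*θ^4
      + 3072*a^2*θ^5 + 2176*a^3*θ^5 - 5408*a^3*θ^6 - 2560*a^4*θ^6 + 6400*a^4*θ^7
      + 2048*a^5*θ^7 - 5120*a^5*θ^8 - 1024*a^6*θ^8 + 2560*a^6*θ^9 + 256*a^7*θ^9
      - 640*a^7*θ^10 with hQ
  have key : X^2 + Y^2 - (1 + (40 * θ ^ 2 - 16 * θ) * a ^ 3) * D = a^4 * Q := by
    rw [hX, hY, hD, hQ]; ring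
  have h2 : (X^2 + Y^2) / D - (1 + (40 * θ ^ 2 - 16 * θ) * a ^ 3) = a^4 * Q / D := by
    field_simp
    linarith [key]
  rw [h2, abs_div, abs_of_pos hD0]
  -- bounds on powers of a
  have haa : |a| ≤ 1 := by rw [abs_le]; constructor <;> linarith
  have hpow : ∀ n : ℕ, |a ^ n| ≤ 1 := fun n => by
    rw [abs_pow]; exact pow_le_one₀ (abs_nonneg a) haa
  have hub : ∀ n : ℕ, a ^ n ≤ 1 := fun n => (abs_le.mp (hpow n)).2
  have hlb : ∀ n : ℕ, -1 ≤ a ^ n := fun n => (abs_le.mp (hpow n)).1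
  have hθn : ∀ n : ℕ, (0:ℝ) ≤ θ ^ n := fun n => pow_nonneg hθ.le n
  have hQb : |Q| ≤ 4 + 32*θ + 16*θ^2 + 544*θ^3 + 2272*θ^4 + 5248*θ^5 + 7968*θ^6
      + 8448*θ^7 + 6144*θ^8 + 2816*θ^9 + 640*θ^10 := by
    rw [abs_le]
    constructor
    · have t1 : (0:ℝ) ≤ 8 := by norm_num
      have t2 : (0:ℝ) ≤ 256*θ^3 := by positivity
      have t3 : (0:ℝ) ≤ 16*θ^2*(1 + a^1) := mul_nonneg (by positivity) (by linarith [hlb 1])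
      have t4 : (0:ℝ) ≤ 416*θ^3*(1 + a^1) := mul_nonneg (by positivity) (by linarith [hlb 1])
      have t5 : (0:ℝ) ≤ 1024*θ^4*(1 - a^1) := mul_nonneg (by positivity) (by linarith [hub 1])
      have t6 : (0:ℝ) ≤ 1248*θ^4*(1 - a^2) := mul_nonneg (by positivity) (by linarith [hub 2])
      have t7 : (0:ℝ) ≤ 3072*θ^5*(1 + a^2) := mul_nonneg (by positivity) (by linarith [hlb 2])
      have t8 : (0:ℝ) ≤ 2176*θ^5*(1 + a^3) := mul_nonneg (by positivity) (by linarith [hlb 3])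
      have t9 : (0:ℝ) ≤ 5408*θ^6*(1 - a^3) := mul_nonneg (by positivity) (by linarith [hub 3])
      have t10 : (0:ℝ) ≤ 2560*θ^6*(1 - a^4) := mul_nonneg (by positivity) (by linarith [hub 4])
      have t11 : (0:ℝ) ≤ 6400*θ^7*(1 + a^4) := mul_nonneg (by positivity) (by linarith [hlb 4])
      have t12 : (0:ℝ) ≤ 2048*θ^7*(1 + a^5) := mul_nonneg (by positivity) (by linarith [hlb 5])
      have t13 : (0:ℝ) ≤ 5120*θ^8*(1 - a^5) := mul_nonneg (by positivity) (by linarith [hub 5])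
      have t14 : (0:ℝ) ≤ 1024*θ^8*(1 - a^6) := mul_nonneg (by positivity) (by linarith [hub 6])
      have t15 : (0:ℝ) ≤ 2560*θ^9*(1 + a^6) := mul_nonneg (by positivity) (by linarith [hlb 6])
      have t16 : (0:ℝ) ≤ 256*θ^9*(1 + a^7) := mul_nonneg (by positivity) (by linarith [hlb 7])
      have t17 : (0:ℝ) ≤ 640*θ^10*(1 - a^7) := mul_nonneg (by positivity) (by linarith [hub 7])
      rw [hQ]
      linarith [t1, t2, t3, t4, t5, t6, t7, t8, t9, t10, t11, t12, t13, t14, t15, t16, t17, hθ]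
    · have t1 : (0:ℝ) ≤ 64*θ := by positivity
      have t3 : (0:ℝ) ≤ 16*θ^2*(1 - a^1) := mul_nonneg (by positivity) (by linarith [hub 1])
      have t4 : (0:ℝ) ≤ 416*θ^3*(1 - a^1) := mul_nonneg (by positivity) (by linarith [hub 1])
      have t5 : (0:ℝ) ≤ 1024*θ^4*(1 + a^1) := mul_nonneg (by positivity) (by linarith [hlb 1])
      have t6 : (0:ℝ) ≤ 1248*θ^4*(1 + a^2) := mul_nonneg (by positivity) (by linarith [hlb 2])
      have t7 : (0:ℝ) ≤ 3072*θ^5*(1 - a^2) := mul_nonneg (by positivity) (by linarith [hub 2])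
      have t8 : (0:ℝ) ≤ 2176*θ^5*(1 - a^3) := mul_nonneg (by positivity) (by linarith [hub 3])
      have t9 : (0:ℝ) ≤ 5408*θ^6*(1 + a^3) := mul_nonneg (by positivity) (by linarith [hlb 3])
      have t10 : (0:ℝ) ≤ 2560*θ^6*(1 + a^4) := mul_nonneg (by positivity) (by linarith [hlb 4])
      have t11 : (0:ℝ) ≤ 6400*θ^7*(1 - a^4) := mul_nonneg (by positivity) (by linarith [hub 4])
      have t12 : (0:ℝ) ≤ 2048*θ^7*(1 - a^5) := mul_nonneg (by positivity) (by linarith [hub 5])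
      have t13 : (0:ℝ) ≤ 5120*θ^8*(1 + a^5) := mul_nonneg (by positivity) (by linarith [hlb 5])
      have t14 : (0:ℝ) ≤ 1024*θ^8*(1 + a^6) := mul_nonneg (by positivity) (by linarith [hlb 6])
      have t15 : (0:ℝ) ≤ 2560*θ^9*(1 - a^6) := mul_nonneg (by positivity) (by linarith [hub 6])
      have t16 : (0:ℝ) ≤ 256*θ^9*(1 - a^7) := mul_nonneg (by positivity) (by linarith [hub 7])
      have t17 : (0:ℝ) ≤ 640*θ^10*(1 + a^7) := mul_nonneg (by positivity) (by linarith [hlb 7])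
      rw [hQ]
      linarith [t1, t3, t4, t5, t6, t7, t8, t9, t10, t11, t12, t13, t14, t15, t16, t17]
  have ha4 : (0:ℝ) ≤ a^4 := by positivity
  calc |a^4 * Q| / D ≤ |a^4 * Q| := div_le_self (abs_nonneg _) hD1
    _ = a^4 * |Q| := by rw [abs_mul, abs_of_nonneg ha4]
    _ ≤ a^4 * (4 + 32*θ + 16*θ^2 + 544*θ^3 + 2272*θ^4 + 5248*θ^5 + 7968*θ^6
        + 8448*θ^7 + 6144*θ^8 + 2816*θ^9 + 640*θ^10) := mul_le_mul_of_nonneg_left hQb ha4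
    _ = _ := by ring

theorem stmt3 (θ : ℝ) (hθ : 0 < θ) :
    let η : ℂ := 1 + Complex.I
    ∃ C > 0, ∃ δ > 0, ∀ a : ℝ, -δ < a → a < 0 →
      |‖S θ (-2 * a) (a * η) (a * η)‖ ^ 2
          - (1 + (40 * θ ^ 2 - 16 * θ) * a ^ 3)| ≤ C * a ^ 4 := by
  intro η
  refine ⟨4 + 32*θ + 16*θ^2 + 544*θ^3 + 2272*θ^4 + 5248*θ^5 + 7968*θ^6 + 8448*θ^7
      + 6144*θ^8 + 2816*θ^9 + 640*θ^10, by positivity, 1, one_pos, fun a h1 h2 => ?_⟩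
  exact aux θ hθ a h1 h2
end

section
/- Let θ > 0 and define S_θ(z₀,z₁,z₂) = 1 + (z₀+z)/p + θ·z₀(z₀+z)/p² + (1/2−θ)·(z₀+z)²/p², where z = z₁+z₂ and p = (1−θz₁)(1−θz₂). Suppose |S_θ(z₀,z₁,z₂)| ≤ 1 holds for all real z₀ and complex z₁, z₂ satisfying |z₀| ≤ 2√(Re z₁ · Re z₂), Re z₁ ≤ 0, Re z₂ ≤ 0. Then θ ≥ 2/5. -/
private lemma aux_pos (θ t : ℝ) (hθ : 0 < θ) (hθ1 : θ < 2/5) (ht : 0 < t)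
    (ht1 : t ≤ 1/72) (h144 : 4*θ - 10*θ^2 = 144 * t) :
    0 < t^3 * ((4*θ - 10*θ^2) + t*(1/4 - 2*θ + 17*θ^2 - 36*θ^3)
        + t^2*(-θ^2 + 10*θ^3 - 46*θ^4) + t^3*(2*θ^4 - 24*θ^5) + t^4*(-4*θ^6)) := by
  have hc4 : (1/4 : ℝ) - 2*θ + 17*θ^2 - 36*θ^3 ≥ -6 := by nlinarith
  have hc5 : -θ^2 + 10*θ^3 - 46*θ^4 ≥ -6 := by nlinarith
  have hc6 : 2*θ^4 - 24*θ^5 ≥ -6 := by nlinarith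
  have hc7 : -4*θ^6 ≥ -6 := by nlinarith
  apply mul_pos (by positivity)
  have ht2 : t^2 ≤ t := by nlinarith
  have ht3 : t^3 ≤ t := by nlinarith
  have ht4 : t^4 ≤ t := by nlinarith
  nlinarith [mul_le_mul_of_nonneg_right hc4 ht.le, mul_le_mul_of_nonneg_right hc5 (sq_nonneg t),
    mul_le_mul_of_nonneg_right hc6 (pow_nonneg ht.le 3),
    mul_le_mul_of_nonneg_right hc7 (pow_nonneg ht.le 4)]

theorem stmt4 (θ : ℝ) (hθ : 0 < θ)
    (h : ∀ (z₀ : ℝ) (z₁ z₂ : ℂ), z₁.re ≤ 0 → z₂.re ≤ 0 →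
      |z₀| ≤ 2 * Real.sqrt (z₁.re * z₂.re) →
      ‖S θ (z₀ : ℂ) z₁ z₂‖ ≤ 1) :
    θ ≥ 2 / 5 := by
  by_contra hlt
  push_neg at hlt
  have h2 : 0 < 2 - 5 * θ := by linarith
  set t : ℝ := θ * (2 - 5 * θ) / 72 with htdef
  have ht : 0 < t := by rw [htdef]; positivity
  have ht1 : t ≤ 1/72 := by
    rw [htdef]
    have : θ * (2 - 5*θ) ≤ 1 := by nlinarith
    linarith
  have h144 : 4*θ - 10*θ^2 = 144 * t := by rw [htdef]; ring
  clear_value t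
  set z₁ : ℂ := (↑(-t) : ℂ) with hz1
  set z₂ : ℂ := (↑(-t) : ℂ) + (↑t : ℂ) * Complex.I with hz2
  clear_value z₁ z₂
  have hre1 : z₁.re = -t := by simp [hz1]
  have hre2 : z₂.re = -t := by simp [hz2]
  have habs : ‖S θ ((2*t : ℝ) : ℂ) z₁ z₂‖ ≤ 1 := by
    apply h
    · rw [hre1]; linarith
    · rw [hre2]; linarith
    · rw [hre1, hre2]
      have : (-t) * (-t) = t * t := by ring
      rw [this, Real.sqrt_mul_self ht.le, abs_of_pos (by linarith)]
  -- S = num / p^2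
  set p : ℂ := (1 - (θ : ℂ) * z₁) * (1 - (θ : ℂ) * z₂) with hp
  set u : ℂ := ((2*t : ℝ) : ℂ) + (z₁ + z₂) with hu
  set num : ℂ := p^2 + u * p + (θ:ℂ) * ((2*t:ℝ):ℂ) * u + (1/2 - (θ:ℂ)) * u^2 with hnum
  clear_value p u num
  have hne1 : (1 - (θ:ℂ)*z₁) ≠ 0 := by
    intro hc
    have : (1 - (θ:ℂ)*z₁).re = 0 := by rw [hc]; simp
    simp [hz1] at this
    nlinarith [mul_pos hθ ht]
  have hne2 : (1 - (θ:ℂ)*z₂) ≠ 0 := by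
    intro hc
    have : (1 - (θ:ℂ)*z₂).re = 0 := by rw [hc]; simp
    simp [hz2, Complex.sub_re, Complex.mul_re] at this
    nlinarith [mul_pos hθ ht]
  have hpne : p ≠ 0 := by rw [hp]; exact mul_ne_zero hne1 hne2
  set_option maxHeartbeats 1600000 in
  have hSeq : S θ ((2*t : ℝ) : ℂ) z₁ z₂ = num / p^2 := by
    rw [eq_div_iff (pow_ne_zero 2 hpne), S]
    rw [← hp, hnum, hu]
    field_simp
  have habs2 : ‖num‖ ≤ ‖p^2‖ := by
    have := habs
    rw [hSeq, norm_div] at this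
    have hppos : 0 < ‖p^2‖ := by
      simpa using (norm_pos_iff.mpr (pow_ne_zero 2 hpne))
    exact (div_le_one hppos).mp this
  have hnsq : Complex.normSq num ≤ Complex.normSq (p^2) := by
    have := mul_le_mul habs2 habs2 (norm_nonneg _) (norm_nonneg _)
    rwa [← Complex.sq_norm, ← Complex.sq_norm, sq, sq]
  -- explicit real computation
  set_option maxHeartbeats 1600000 in
  have hnum_n : Complex.normSq num =
      ((1+θ*t)^2*(1+θ*t)^2 - ((1+θ*t)*θ*t)^2 + t*((1+θ*t)*θ*t) - (1/2-θ)*t^2)^2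
      + (-2*(1+θ*t)^2*((1+θ*t)*θ*t) + t*(1+θ*t)^2 + 2*θ*t^2)^2 := by
    rw [hnum, hu, hp, hz1, hz2]
    simp [Complex.normSq_apply, Complex.add_re, Complex.add_im, Complex.mul_re,
      Complex.mul_im, Complex.sub_re, Complex.sub_im, Complex.ofReal_re, Complex.ofReal_im,
      Complex.I_re, Complex.I_im, Complex.one_re, Complex.one_im, pow_two]
    ring
  set_option maxHeartbeats 1600000 in
  have hp_n : Complex.normSq (p^2) =
      ((1+θ*t)^2*(1+θ*t)^2 - ((1+θ*t)*θ*t)^2)^2 + (-2*(1+θ*t)^2*((1+θ*t)*θ*t))^2 := by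
    rw [hp, hz1, hz2]
    simp [Complex.normSq_apply, Complex.add_re, Complex.add_im, Complex.mul_re,
      Complex.mul_im, Complex.sub_re, Complex.sub_im, Complex.ofReal_re, Complex.ofReal_im,
      Complex.I_re, Complex.I_im, Complex.one_re, Complex.one_im, pow_two]
    ring
  rw [hnum_n, hp_n] at hnsq
  set_option maxHeartbeats 1600000 in
  have hdiff : ((1+θ*t)^2*(1+θ*t)^2 - ((1+θ*t)*θ*t)^2 + t*((1+θ*t)*θ*t) - (1/2-θ)*t^2)^2
      + (-2*(1+θ*t)^2*((1+θ*t)*θ*t) + t*(1+θ*t)^2 + 2*θ*t^2)^2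
      - (((1+θ*t)^2*(1+θ*t)^2 - ((1+θ*t)*θ*t)^2)^2 + (-2*(1+θ*t)^2*((1+θ*t)*θ*t))^2)
      = t^3 * ((4*θ - 10*θ^2) + t*(1/4 - 2*θ + 17*θ^2 - 36*θ^3)
        + t^2*(-θ^2 + 10*θ^3 - 46*θ^4) + t^3*(2*θ^4 - 24*θ^5) + t^4*(-4*θ^6)) := by
    ring
  have hpos := aux_pos θ t hθ hlt ht ht1 h144
  set_option maxHeartbeats 1600000 in
  linarith [hdiff ▸ hpos]
end

section
/- Let a, b, c be real numbers with |a+b+c| = 1 such that |aζ² + bζ + c| ≤ 1 for all complex ζ with |ζ| = 1. Then ab + bc + 4ac ≥ 0. -/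
theorem stmt5 (a b c : ℝ) (habc : |a + b + c| = 1)
    (h : ∀ ζ : ℂ, ‖ζ‖ = 1 →
      ‖(a : ℂ) * ζ ^ 2 + (b : ℂ) * ζ + (c : ℂ)‖ ≤ 1) :
    a * b + b * c + 4 * a * c ≥ 0 := by
  have h1 : (a + b + c) ^ 2 = 1 := by
    have := sq_abs (a + b + c); rw [habc] at this; linarith [this]
  have key : ∀ θ : ℝ, a^2 + b^2 + c^2 + 2*(a*b+b*c)*Real.cos θ
      + 2*a*c*(2*Real.cos θ^2 - 1) ≤ 1 := by
    intro θ
    set z : ℂ := ⟨Real.cos θ, Real.sin θ⟩ with hz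
    have hzabs : ‖z‖ = 1 := by
      rw [Complex.norm_def, Complex.normSq_mk]
      rw [show Real.cos θ * Real.cos θ + Real.sin θ * Real.sin θ = 1 by
        nlinarith [Real.sin_sq_add_cos_sq θ]]
      exact Real.sqrt_one
    have hle := h z hzabs
    have h2 : Complex.normSq ((a:ℂ) * z ^ 2 + b * z + c) ≤ 1 := by
      rw [← Complex.sq_norm]
      nlinarith [norm_nonneg ((a:ℂ) * z ^ 2 + b * z + c)]
    refine le_trans (le_of_eq ?_) h2
    simp only [Complex.normSq_apply, pow_two, Complex.mul_re, Complex.mul_im,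
      Complex.add_re, Complex.add_im, Complex.ofReal_re, Complex.ofReal_im, hz]
    linear_combination (-(a^2*Real.sin θ^2 + a^2*Real.cos θ^2 + a^2
      + 2*a*b*Real.cos θ + b^2 - 2*a*c)) * (Real.sin_sq_add_cos_sq θ)
  have hpos : ∀ θ : ℝ, Real.cos θ < 1 →
      a*b + b*c + 2*a*c*(1 + Real.cos θ) ≥ 0 := by
    intro θ hθ
    by_contra hG
    push_neg at hG
    have hk := key θ
    nlinarith [mul_pos (sub_pos.2 hθ) (by linarith :
      (0:ℝ) < -(a*b + b*c + 2*a*c*(1 + Real.cos θ)))]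
  have hcoslt : ∀ n : ℕ, Real.cos (1/(n+1)) < 1 := by
    intro n
    have h0 : (0:ℝ) < 1/(n+1) := by positivity
    have hpi : (1:ℝ)/(n+1) ≤ Real.pi := by
      have : (1:ℝ)/(n+1) ≤ 1 := by
        rw [div_le_one (by positivity)]; linarith [Nat.cast_nonneg (α := ℝ) n]
      linarith [Real.pi_gt_three]
    have := Real.cos_lt_cos_of_nonneg_of_le_pi le_rfl hpi h0
    simpa using this
  have htend : Filter.Tendsto (fun n : ℕ => a*b + b*c + 2*a*c*(1 + Real.cos (1/(n+1))))
      Filter.atTop (nhds (a*b + b*c + 4*a*c)) := by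
    have h1' : Filter.Tendsto (fun n : ℕ => (1:ℝ)/(n+1)) Filter.atTop (nhds 0) :=
      tendsto_one_div_add_atTop_nhds_zero_nat
    have h2' : Filter.Tendsto (fun n : ℕ => Real.cos (1/(n+1))) Filter.atTop (nhds 1) := by
      have := (Real.continuous_cos.tendsto 0).comp h1'
      simpa [Function.comp_def] using this
    have h3' := (tendsto_const_nhds (x := a*b + b*c)).add
      ((tendsto_const_nhds (x := 2*a*c)).mul ((tendsto_const_nhds (x := (1:ℝ))).add h2'))
    convert h3' using 2
    ring
  exact ge_of_tendsto' htend (fun n => hpos _ (hcoslt n))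
end

section
/- Let θ > 0 and define S_θ(z₀,z₁,z₂) = 1 + (z₀+z)/p + θ·z₀(z₀+z)/p² + (1/2−θ)·(z₀+z)²/p² with z = z₁+z₂, p = (1−θz₁)(1−θz₂). Suppose |S_θ(z₀,z₁,z₂)| ≤ 1 holds for all complex z₀ and real z₁, z₂ satisfying |z₀| ≤ 2√(z₁z₂), z₁ ≤ 0, z₂ ≤ 0. Then θ ≥ 5/12. -/
/-- Value of `S` at the witness point `z₁ = z₂ = -1/θ`, `z₀ = (2/θ)(x + y i)` with
`x² + y² = 1`. -/
lemma S_eval (θ x y : ℝ) (hθC : (θ:ℂ) ≠ 0) (hy2 : y ^ 2 = 1 - x ^ 2) :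
    S θ (((2*x/θ : ℝ) : ℂ) + ((2*y/θ : ℝ) : ℂ) * Complex.I) ((-(1/θ) : ℝ) : ℂ) ((-(1/θ) : ℝ) : ℂ)
      = (((8 * θ ^ 2 - 6 * θ + (6 * θ - 2) * x + 2 * x ^ 2) / (8 * θ ^ 2) : ℝ) : ℂ)
        + ((y * (6 * θ - 2 + 2 * x) / (8 * θ ^ 2) : ℝ) : ℂ) * Complex.I := by
  have hy2C : (y:ℂ) ^ 2 = 1 - (x:ℂ) ^ 2 := by exact_mod_cast hy2
  simp only [S]
  push_cast
  field_simp [hθC]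
  ring_nf
  simp only [Complex.I_sq]
  field_simp
  linear_combination (-32 : ℂ) * hy2C

theorem stmt7 (θ : ℝ) (hθ : 0 < θ)
    (h : ∀ (z₀ : ℂ) (z₁ z₂ : ℝ), z₁ ≤ 0 → z₂ ≤ 0 →
      ‖z₀‖ ≤ 2 * Real.sqrt (z₁ * z₂) →
      ‖S θ z₀ (z₁ : ℂ) (z₂ : ℂ)‖ ≤ 1) :
    θ ≥ 5 / 12 := by
  by_contra hcon
  push_neg at hcon
  have hθ' : θ ≠ 0 := hθ.ne'
  have hθC : (θ : ℂ) ≠ 0 := by exact_mod_cast hθ'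
  set ε : ℝ := θ ^ 2 * (5 - 12 * θ) with hεdef
  have hε0 : 0 < ε := by
    have h5 : 0 < 5 - 12 * θ := by linarith
    positivity
  have hε2 : ε ≤ 2 := by nlinarith [sq_nonneg θ, sq_nonneg (θ - 1)]
  set x : ℝ := 1 - ε with hxdef
  have hx2 : x ^ 2 ≤ 1 := by nlinarith
  set y : ℝ := Real.sqrt (1 - x ^ 2) with hydef
  have hy2 : y ^ 2 = 1 - x ^ 2 := Real.sq_sqrt (by linarith)
  -- the hypothesis of `h` on `|z₀|`
  have habs : ‖((2*x/θ : ℝ) : ℂ) + ((2*y/θ : ℝ) : ℂ) * Complex.I‖ ≤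
      2 * Real.sqrt ((-(1/θ)) * (-(1/θ))) := by
    rw [Complex.norm_add_mul_I]
    have h1 : (2*x/θ) ^ 2 + (2*y/θ) ^ 2 = (2 / θ) ^ 2 := by
      field_simp
      nlinarith [hy2]
    have h2 : (-(1/θ)) * (-(1/θ)) = (1 / θ) ^ 2 := by ring
    rw [h1, h2, Real.sqrt_sq (by positivity : (0:ℝ) ≤ 2 / θ),
      Real.sqrt_sq (by positivity : (0:ℝ) ≤ 1 / θ)]
    rw [mul_one_div]
  have hneg : -(1/θ) ≤ (0:ℝ) := neg_nonpos.mpr (by positivity)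
  have key := h (((2*x/θ : ℝ) : ℂ) + ((2*y/θ : ℝ) : ℂ) * Complex.I) (-(1/θ)) (-(1/θ))
    hneg hneg habs
  rw [S_eval θ x y hθC hy2, Complex.norm_add_mul_I] at key
  have hkey2 : ((8 * θ ^ 2 - 6 * θ + (6 * θ - 2) * x + 2 * x ^ 2) / (8 * θ ^ 2)) ^ 2
      + (y * (6 * θ - 2 + 2 * x) / (8 * θ ^ 2)) ^ 2 ≤ 1 := by
    set t : ℝ := ((8 * θ ^ 2 - 6 * θ + (6 * θ - 2) * x + 2 * x ^ 2) / (8 * θ ^ 2)) ^ 2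
      + (y * (6 * θ - 2 + 2 * x) / (8 * θ ^ 2)) ^ 2 with htdef
    have ht0 : (0:ℝ) ≤ t := by positivity
    nlinarith [Real.sq_sqrt ht0, Real.sqrt_nonneg t]
  -- the algebraic contradiction
  have hN : (8 * θ ^ 2 - 6 * θ + (6 * θ - 2) * x + 2 * x ^ 2) ^ 2
      + y ^ 2 * (6 * θ - 2 + 2 * x) ^ 2 - 64 * θ ^ 4
      = 4 * θ ^ 4 * (5 - 12 * θ) ^ 2 * (8 * θ ^ 2 - 6 * θ + 3) := by
    rw [hy2, hxdef, hεdef]; ring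
  have hpos : 0 < 4 * θ ^ 4 * (5 - 12 * θ) ^ 2 * (8 * θ ^ 2 - 6 * θ + 3) := by
    have h1 : 0 < 5 - 12 * θ := by linarith
    have h2 : 0 < 8 * θ ^ 2 - 6 * θ + 3 := by nlinarith [sq_nonneg (4 * θ - 3/2)]
    positivity
  have hA2 : ((8 * θ ^ 2 - 6 * θ + (6 * θ - 2) * x + 2 * x ^ 2) / (8 * θ ^ 2)) ^ 2
      + (y * (6 * θ - 2 + 2 * x) / (8 * θ ^ 2)) ^ 2
      = ((8 * θ ^ 2 - 6 * θ + (6 * θ - 2) * x + 2 * x ^ 2) ^ 2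
        + y ^ 2 * (6 * θ - 2 + 2 * x) ^ 2) / (64 * θ ^ 4) := by
    field_simp; ring
  rw [hA2, div_le_one (by positivity)] at hkey2
  nlinarith [hkey2, hN, hpos]
end

section
/- Let θ > 0 and let z₁, z₂ be complex numbers with Re z₁ ≤ 0 and Re z₂ ≤ 0. Set z = z₁ + z₂ and p = (1−θz₁)(1−θz₂). Then 2√((Re z₁)(Re z₂)) ≤ |p/(2θ)| − |p/(2θ) + z|. -/
set_option maxHeartbeats 1000000 in
theorem stmt10 (θ : ℝ) (hθ : 0 < θ) (z₁ z₂ : ℂ)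
    (h₁ : z₁.re ≤ 0) (h₂ : z₂.re ≤ 0) :
    let z : ℂ := z₁ + z₂
    let p : ℂ := (1 - (θ : ℂ) * z₁) * (1 - (θ : ℂ) * z₂)
    2 * Real.sqrt (z₁.re * z₂.re)
      ≤ ‖p / (2 * θ)‖ - ‖p / (2 * θ) + z‖ := by
  intro z p
  have hθ' : (0:ℝ) < 2 * θ := by linarith
  have hθc : ((2:ℂ) * θ) ≠ 0 := by
    have : ((2*θ:ℝ):ℂ) ≠ 0 := by exact_mod_cast hθ'.ne'
    simpa using this
  set A := ‖1 - (θ:ℂ) * z₁‖ with hAdef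
  set B := ‖1 - (θ:ℂ) * z₂‖ with hBdef
  set C := ‖1 + (θ:ℂ) * z₁‖ with hCdef
  set D := ‖1 + (θ:ℂ) * z₂‖ with hDdef
  have hA0 : 0 ≤ A := norm_nonneg _
  have hB0 : 0 ≤ B := norm_nonneg _
  have hC0 : 0 ≤ C := norm_nonneg _
  have hD0 : 0 ≤ D := norm_nonneg _
  have habs2θ : ‖2 * (θ:ℂ)‖ = 2 * θ := by
    rw [norm_mul]
    simp [Complex.norm_real, abs_of_pos hθ]
  have key : p / (2 * (θ:ℂ)) + z = (1 + (θ:ℂ)*z₁) * (1 + (θ:ℂ)*z₂) / (2 * θ) := by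
    rw [div_add' _ _ _ hθc, div_left_inj' hθc]
    simp only [p, z]
    ring
  have e1 : ‖p / (2 * (θ:ℂ))‖ = A * B / (2 * θ) := by
    rw [norm_div, habs2θ]; simp only [p, norm_mul]; rfl
  have e2 : ‖p / (2 * (θ:ℂ)) + z‖ = C * D / (2 * θ) := by
    rw [key, norm_div, habs2θ, norm_mul]
  have hA2 : A ^ 2 - C ^ 2 = -4 * θ * z₁.re := by
    rw [hAdef, hCdef, Complex.sq_norm, Complex.sq_norm]
    simp [Complex.normSq_apply, Complex.add_re, Complex.add_im, Complex.sub_re,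
      Complex.sub_im, Complex.mul_re, Complex.mul_im]
    ring
  have hB2 : B ^ 2 - D ^ 2 = -4 * θ * z₂.re := by
    rw [hBdef, hDdef, Complex.sq_norm, Complex.sq_norm]
    simp [Complex.normSq_apply, Complex.add_re, Complex.add_im, Complex.sub_re,
      Complex.sub_im, Complex.mul_re, Complex.mul_im]
    ring
  set s := Real.sqrt (A ^ 2 - C ^ 2) with hsdef
  set t := Real.sqrt (B ^ 2 - D ^ 2) with htdef
  have hs0 : 0 ≤ s := Real.sqrt_nonneg _
  have ht0 : 0 ≤ t := Real.sqrt_nonneg _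
  have hs2 : s ^ 2 = A ^ 2 - C ^ 2 := by
    rw [hsdef, Real.sq_sqrt]; rw [hA2]; nlinarith
  have ht2 : t ^ 2 = B ^ 2 - D ^ 2 := by
    rw [htdef, Real.sq_sqrt]; rw [hB2]; nlinarith
  have hst : s * t = 4 * θ * Real.sqrt (z₁.re * z₂.re) := by
    rw [hsdef, htdef, hA2, hB2, ← Real.sqrt_mul (by nlinarith)]
    have : (-4 * θ * z₁.re) * (-4 * θ * z₂.re) = (4*θ)^2 * (z₁.re * z₂.re) := by ring
    rw [this, Real.sqrt_mul (by positivity), Real.sqrt_sq (by positivity)]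
  -- Cauchy–Schwarz: C*D + s*t ≤ A*B
  have cs : C * D + s * t ≤ A * B := by
    have hsq : (C * D + s * t) ^ 2 ≤ (A * B) ^ 2 := by
      nlinarith [sq_nonneg (C * t - D * s)]
    have h1 : 0 ≤ C * D + s * t := by positivity
    have h2 : 0 ≤ A * B := mul_nonneg hA0 hB0
    exact (pow_le_pow_iff_left₀ h1 h2 two_ne_zero).mp hsq
  rw [e1, e2, div_sub_div_same, le_div_iff₀ hθ']
  nlinarith [Real.sqrt_nonneg (z₁.re * z₂.re)]
end

section
/- Let θ ≥ 1/2 and r ∈ [0,1]. The function g₂(φ) = |8θ² + 4θ(r·e^{iφ}−1) + (1−2θ)(r·e^{iφ}−1)²|² satisfies g₂'(φ) = 4(2θ−1)(4θ−1)[2(2θ−1)r·cos φ + r² − (4θ−1)]·r·sin φ, and since 2(2θ−1)r·cos φ + r² − (4θ−1) ≤ 0, g₂ is nonincreasing on [0, π]. -/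
theorem stmt14 (θ : ℝ) (hθ : 1 / 2 ≤ θ) (r : ℝ) (hr : r ∈ Set.Icc (0 : ℝ) 1) :
    let g₂ : ℝ → ℝ := fun φ =>
      ‖(8 * θ ^ 2 : ℂ) + (4 * θ : ℂ) * ((r : ℂ) * Complex.exp (Complex.I * φ) - 1)
        + ((1 : ℂ) - 2 * θ) * ((r : ℂ) * Complex.exp (Complex.I * φ) - 1) ^ 2‖ ^ 2
    (∀ φ : ℝ, deriv g₂ φ = 4 * (2 * θ - 1) * (4 * θ - 1)
        * (2 * (2 * θ - 1) * r * Real.cos φ + r ^ 2 - (4 * θ - 1)) * r * Real.sin φ) ∧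
    (∀ φ : ℝ, 2 * (2 * θ - 1) * r * Real.cos φ + r ^ 2 - (4 * θ - 1) ≤ 0) ∧
    AntitoneOn g₂ (Set.Icc 0 Real.pi) := by
  intro g₂
  obtain ⟨hr0, hr1⟩ := hr
  set A : ℝ := 1 + 2*r^2 + r^4 - 12*θ - 16*θ*r^2 - 4*θ*r^4 + 52*θ^2 + 24*θ^2*r^2
      + 4*θ^2*r^4 - 96*θ^3 + 32*θ^3*r^2 + 64*θ^4 with hA
  set B : ℝ := -4*r - 4*r^3 + 40*θ*r + 24*θ*r^3 - 128*θ^2*r - 32*θ^2*r^3 + 128*θ^3*r with hB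
  set C : ℝ := 4*r^2 - 32*θ*r^2 + 80*θ^2*r^2 - 64*θ^3*r^2 with hC
  have hg : g₂ = fun φ => A + B * Real.cos φ + C * Real.cos φ ^ 2 := by
    funext φ
    show ‖_‖ ^ 2 = _
    set c := Real.cos φ
    set s := Real.sin φ
    have hE : (8 * θ ^ 2 : ℂ) + (4 * θ : ℂ) * ((r : ℂ) * Complex.exp (Complex.I * φ) - 1)
        + ((1 : ℂ) - 2 * θ) * ((r : ℂ) * Complex.exp (Complex.I * φ) - 1) ^ 2
        = ((8*θ^2 + 4*θ*(r*c-1) + (1-2*θ)*((r*c-1)^2 - r^2*s^2) : ℝ) : ℂ)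
          + ((4*θ*r*s + (1-2*θ)*(2*(r*c-1)*r*s) : ℝ) : ℂ) * Complex.I := by
      rw [mul_comm Complex.I, Complex.exp_mul_I, ← Complex.ofReal_cos, ← Complex.ofReal_sin]
      simp only [Complex.ext_iff, Complex.add_re, Complex.add_im, Complex.mul_re, Complex.mul_im,
        Complex.sub_re, Complex.sub_im, Complex.ofReal_re, Complex.ofReal_im, Complex.one_re,
        Complex.one_im, Complex.I_re, Complex.I_im, Complex.re_ofNat, Complex.im_ofNat, pow_two, Complex.mul_re, Complex.mul_im]
      constructor <;> ring
    rw [hE, Complex.sq_norm, Complex.normSq_add_mul_I]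
    have hsc : s^2 + c^2 = 1 := Real.sin_sq_add_cos_sq φ
    rw [hA, hB, hC]
    linear_combination (2*r^2 - 4*r^3*c + r^4 + r^4*s^2 + r^4*c^2 - 16*θ*r^2 + 24*θ*r^3*c
      - 4*θ*r^4 - 4*θ*r^4*s^2 - 4*θ*r^4*c^2 + 24*θ^2*r^2 - 32*θ^2*r^3*c + 4*θ^2*r^4
      + 4*θ^2*r^4*s^2 + 4*θ^2*r^4*c^2 + 32*θ^3*r^2) * hsc
  have hder : ∀ φ : ℝ, HasDerivAt g₂
      (B * (-Real.sin φ) + C * (2 * Real.cos φ ^ 1 * (-Real.sin φ))) φ := by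
    intro φ
    rw [hg]
    exact (((Real.hasDerivAt_cos φ).const_mul B).const_add A).add
      (((Real.hasDerivAt_cos φ).pow 2).const_mul C)
  have hderiv : ∀ φ : ℝ, deriv g₂ φ = 4 * (2 * θ - 1) * (4 * θ - 1)
      * (2 * (2 * θ - 1) * r * Real.cos φ + r ^ 2 - (4 * θ - 1)) * r * Real.sin φ := by
    intro φ
    rw [(hder φ).deriv, hB, hC]
    ring
  have hineq : ∀ φ : ℝ, 2 * (2 * θ - 1) * r * Real.cos φ + r ^ 2 - (4 * θ - 1) ≤ 0 := by
    intro φ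
    have hc1 := Real.cos_le_one φ
    nlinarith [mul_nonneg (by linarith : (0:ℝ) ≤ 2*θ-1) hr0,
      mul_nonneg (mul_nonneg (by linarith : (0:ℝ) ≤ 2*θ-1) hr0) (by linarith : (0:ℝ) ≤ 1 - Real.cos φ),
      mul_nonneg (by linarith : (0:ℝ) ≤ 2*θ-1) (by linarith : (0:ℝ) ≤ 1 - r),
      mul_nonneg hr0 (by linarith : (0:ℝ) ≤ 1 - r)]
  refine ⟨hderiv, hineq, ?_⟩
  apply antitoneOn_of_deriv_nonpos (convex_Icc 0 Real.pi)
  · rw [hg]; fun_prop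
  · rw [hg]; apply Differentiable.differentiableOn; fun_prop
  · intro x hx
    rw [interior_Icc] at hx
    have hs : 0 ≤ Real.sin x := Real.sin_nonneg_of_nonneg_of_le_pi hx.1.le hx.2.le
    have hM := hineq x
    have hP : 0 ≤ 4 * (2 * θ - 1) * (4 * θ - 1) * r * Real.sin x := by
      have h1 : (0:ℝ) ≤ 2*θ-1 := by linarith
      have h2 : (0:ℝ) ≤ 4*θ-1 := by linarith
      positivity
    rw [hderiv x]
    nlinarith [mul_nonpos_of_nonneg_of_nonpos hP hM]
end

section
/- Let D = (d_{ij}) be a 2×2 real positive semi-definite matrix, let c₁, c₂ ∈ ℝ, let a₁, a₂, b, q₁, q₂ > 0 with b² = a₁a₂ (e.g. a₁ = Δt/Δx², a₂ = Δt/Δy², b = Δt/(ΔxΔy)), let β ∈ [−1,1], and let φ₁, φ₂ ∈ ℝ. Define z₀ = (d₁₂+d₂₁)·b·[−sin φ₁ sin φ₂ + β(1−cos φ₁)(1−cos φ₂)], z₁ = −2d₁₁a₁(1−cos φ₁) + i·c₁q₁ sin φ₁, z₂ = −2d₂₂a₂(1−cos φ₂) + i·c₂q₂ sin φ₂. Then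 |z₀| ≤ 2√((Re z₁)(Re z₂)), Re z₁ ≤ 0, and Re z₂ ≤ 0. -/
lemma stmt17_aux (u v : ℝ) (hu0 : 0 ≤ u) (hu2 : u ≤ 2) (hv0 : 0 ≤ v) (hv2 : v ≤ 2) :
    Real.sqrt (u * (2 - u) * (v * (2 - v))) + u * v ≤ 2 * Real.sqrt (u * v) := by
  have hU0 : 0 ≤ Real.sqrt (u * v) := Real.sqrt_nonneg _
  have hUsq : Real.sqrt (u * v) ^ 2 = u * v := Real.sq_sqrt (mul_nonneg hu0 hv0)
  have hsplit : Real.sqrt (u * (2 - u) * (v * (2 - v)))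
      = Real.sqrt (u * v) * Real.sqrt ((2 - u) * (2 - v)) := by
    rw [← Real.sqrt_mul (mul_nonneg hu0 hv0) ((2 - u) * (2 - v))]
    congr 1; ring
  have h1 : Real.sqrt ((2 - u) * (2 - v)) ≤ ((2 - u) + (2 - v)) / 2 := by
    have h := Real.sqrt_le_sqrt (show (2 - u) * (2 - v) ≤ (((2 - u) + (2 - v)) / 2) ^ 2 by
      nlinarith [sq_nonneg (u - v)])
    calc Real.sqrt ((2 - u) * (2 - v)) ≤ Real.sqrt ((((2 - u) + (2 - v)) / 2) ^ 2) := h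
      _ = ((2 - u) + (2 - v)) / 2 := Real.sqrt_sq (by linarith)
  have h2 : Real.sqrt (u * v) ≤ (u + v) / 2 := by
    have h := Real.sqrt_le_sqrt (show u * v ≤ ((u + v) / 2) ^ 2 by
      nlinarith [sq_nonneg (u - v)])
    calc Real.sqrt (u * v) ≤ Real.sqrt (((u + v) / 2) ^ 2) := h
      _ = (u + v) / 2 := Real.sqrt_sq (by linarith)
  have hVle : Real.sqrt ((2 - u) * (2 - v)) ≤ 2 - Real.sqrt (u * v) := by linarith
  have := mul_le_mul_of_nonneg_left hVle hU0
  rw [hsplit]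
  nlinarith [this, hUsq]

lemma stmt17_trig (u v β s₁ s₂ : ℝ) (hu0 : 0 ≤ u) (hu2 : u ≤ 2) (hv0 : 0 ≤ v) (hv2 : v ≤ 2)
    (hβ1 : |β| ≤ 1) (hs1 : s₁ ^ 2 = u * (2 - u)) (hs2 : s₂ ^ 2 = v * (2 - v)) :
    |(-s₁ * s₂ + β * u * v)| ≤ 2 * Real.sqrt (u * v) := by
  have habs : |s₁ * s₂| = Real.sqrt (u * (2 - u) * (v * (2 - v))) := by
    rw [← Real.sqrt_sq_eq_abs, show (s₁ * s₂) ^ 2 = u * (2 - u) * (v * (2 - v)) by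
      rw [mul_pow, hs1, hs2]]
  have hbd : |(-s₁ * s₂ + β * u * v)| ≤ |s₁ * s₂| + u * v := by
    have hb3 : |β * u * v| ≤ u * v := by
      rw [abs_mul, abs_mul, abs_of_nonneg hu0, abs_of_nonneg hv0]
      nlinarith [abs_nonneg β, mul_nonneg hu0 hv0]
    calc |(-s₁ * s₂ + β * u * v)| ≤ |(-s₁ * s₂)| + |β * u * v| := abs_add_le _ _
      _ ≤ |s₁ * s₂| + u * v := by rw [neg_mul, abs_neg]; linarith
  have := stmt17_aux u v hu0 hu2 hv0 hv2
  rw [habs] at hbd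
  linarith

theorem stmt17 (D : Matrix (Fin 2) (Fin 2) ℝ) (hD : D.PosSemidef)
    (c₁ c₂ a₁ a₂ b q₁ q₂ : ℝ)
    (ha₁ : 0 < a₁) (ha₂ : 0 < a₂) (hb : 0 < b) (hq₁ : 0 < q₁) (hq₂ : 0 < q₂)
    (hba : b ^ 2 = a₁ * a₂)
    (β : ℝ) (hβ : β ∈ Set.Icc (-1 : ℝ) 1) (φ₁ φ₂ : ℝ) :
    let z₀ : ℝ := (D 0 1 + D 1 0) * b *
      (-Real.sin φ₁ * Real.sin φ₂ + β * (1 - Real.cos φ₁) * (1 - Real.cos φ₂))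
    let z₁ : ℂ := (-2 * D 0 0 * a₁ * (1 - Real.cos φ₁) : ℝ)
      + Complex.I * (c₁ * q₁ * Real.sin φ₁ : ℝ)
    let z₂ : ℂ := (-2 * D 1 1 * a₂ * (1 - Real.cos φ₂) : ℝ)
      + Complex.I * (c₂ * q₂ * Real.sin φ₂ : ℝ)
    |z₀| ≤ 2 * Real.sqrt (z₁.re * z₂.re) ∧ z₁.re ≤ 0 ∧ z₂.re ≤ 0 := by
  intro z₀ z₁ z₂
  have hd00 : 0 ≤ D 0 0 := by
    have := hD.dotProduct_mulVec_nonneg ![1, 0]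
    simpa [dotProduct, Matrix.mulVec, Fin.sum_univ_two] using this
  have hd11 : 0 ≤ D 1 1 := by
    have := hD.dotProduct_mulVec_nonneg ![0, 1]
    simpa [dotProduct, Matrix.mulVec, Fin.sum_univ_two] using this
  have hdet : (D 0 1 + D 1 0) ^ 2 ≤ 4 * (D 0 0) * (D 1 1) := by
    have h : ∀ t : ℝ, 0 ≤ D 0 0 * (t * t) + (D 0 1 + D 1 0) * t + D 1 1 := by
      intro t
      have := hD.dotProduct_mulVec_nonneg ![t, 1]
      simp [dotProduct, Matrix.mulVec, Fin.sum_univ_two] at this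
      nlinarith [this]
    have := discrim_le_zero h
    rw [discrim] at this; nlinarith [this]
  have hu0 : 0 ≤ 1 - Real.cos φ₁ := by have := Real.cos_le_one φ₁; linarith
  have hu2 : 1 - Real.cos φ₁ ≤ 2 := by have := Real.neg_one_le_cos φ₁; linarith
  have hv0 : 0 ≤ 1 - Real.cos φ₂ := by have := Real.cos_le_one φ₂; linarith
  have hv2 : 1 - Real.cos φ₂ ≤ 2 := by have := Real.neg_one_le_cos φ₂; linarith
  have hz1re : z₁.re = -2 * D 0 0 * a₁ * (1 - Real.cos φ₁) := by
    simp only [z₁, Complex.add_re, Complex.ofReal_re, Complex.mul_re, Complex.I_re,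
      Complex.I_im, Complex.ofReal_im]
    ring
  have hz2re : z₂.re = -2 * D 1 1 * a₂ * (1 - Real.cos φ₂) := by
    simp only [z₂, Complex.add_re, Complex.ofReal_re, Complex.mul_re, Complex.I_re,
      Complex.I_im, Complex.ofReal_im]
    ring
  have h1 : z₁.re ≤ 0 := by
    rw [hz1re]; nlinarith [mul_nonneg (mul_nonneg hd00 ha₁.le) hu0]
  have h2 : z₂.re ≤ 0 := by
    rw [hz2re]; nlinarith [mul_nonneg (mul_nonneg hd11 ha₂.le) hv0]
  refine ⟨?_, h1, h2⟩
  have hs1 : Real.sin φ₁ ^ 2 = (1 - Real.cos φ₁) * (2 - (1 - Real.cos φ₁)) := by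
    have := Real.sin_sq_add_cos_sq φ₁; nlinarith [this]
  have hs2 : Real.sin φ₂ ^ 2 = (1 - Real.cos φ₂) * (2 - (1 - Real.cos φ₂)) := by
    have := Real.sin_sq_add_cos_sq φ₂; nlinarith [this]
  have hβ1 : |β| ≤ 1 := abs_le.mpr ⟨hβ.1, hβ.2⟩
  have htrig := stmt17_trig (1 - Real.cos φ₁) (1 - Real.cos φ₂) β (Real.sin φ₁) (Real.sin φ₂)
    hu0 hu2 hv0 hv2 hβ1 hs1 hs2
  have hdabs : |D 0 1 + D 1 0| ≤ 2 * Real.sqrt (D 0 0 * D 1 1) := by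
    rw [← Real.sqrt_sq_eq_abs]
    calc Real.sqrt ((D 0 1 + D 1 0) ^ 2) ≤ Real.sqrt (2 ^ 2 * (D 0 0 * D 1 1)) := by
          apply Real.sqrt_le_sqrt; nlinarith
      _ = 2 * Real.sqrt (D 0 0 * D 1 1) := by
          rw [Real.sqrt_mul (by positivity) (D 0 0 * D 1 1), Real.sqrt_sq (by norm_num)]
  have hRHS : Real.sqrt (z₁.re * z₂.re)
      = 2 * Real.sqrt (D 0 0 * D 1 1) * b * Real.sqrt ((1 - Real.cos φ₁) * (1 - Real.cos φ₂)) := by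
    rw [hz1re, hz2re]
    rw [show (-2 * D 0 0 * a₁ * (1 - Real.cos φ₁)) * (-2 * D 1 1 * a₂ * (1 - Real.cos φ₂))
        = 2 ^ 2 * ((D 0 0 * D 1 1) * (b ^ 2 * ((1 - Real.cos φ₁) * (1 - Real.cos φ₂))))
      by rw [hba]; ring]
    rw [Real.sqrt_mul (by positivity : (0:ℝ) ≤ 2 ^ 2), Real.sqrt_sq (by norm_num : (0:ℝ) ≤ 2),
      Real.sqrt_mul (mul_nonneg hd00 hd11),
      Real.sqrt_mul (sq_nonneg b), Real.sqrt_sq hb.le]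
    ring
  rw [hRHS]
  have hz0 : |z₀| = |D 0 1 + D 1 0| * b *
      |(-Real.sin φ₁ * Real.sin φ₂ + β * (1 - Real.cos φ₁) * (1 - Real.cos φ₂))| := by
    simp only [z₀]
    rw [abs_mul, abs_mul, abs_of_pos hb]
  rw [hz0]
  calc |D 0 1 + D 1 0| * b *
        |(-Real.sin φ₁ * Real.sin φ₂ + β * (1 - Real.cos φ₁) * (1 - Real.cos φ₂))|
      ≤ (2 * Real.sqrt (D 0 0 * D 1 1)) * b *
        (2 * Real.sqrt ((1 - Real.cos φ₁) * (1 - Real.cos φ₂))) := by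
        apply mul_le_mul
        · exact mul_le_mul_of_nonneg_right hdabs hb.le
        · calc |(-Real.sin φ₁ * Real.sin φ₂ + β * (1 - Real.cos φ₁) * (1 - Real.cos φ₂))|
              = |(-Real.sin φ₁ * Real.sin φ₂ + β * (1 - Real.cos φ₁) * (1 - Real.cos φ₂))| := rfl
            _ ≤ 2 * Real.sqrt ((1 - Real.cos φ₁) * (1 - Real.cos φ₂)) := by
                have heq : -Real.sin φ₁ * Real.sin φ₂ + β * (1 - Real.cos φ₁) * (1 - Real.cos φ₂)
                    = -Real.sin φ₁ * Real.sin φ₂ + β * (1 - Real.cos φ₁) * (1 - Real.cos φ₂) := rfl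
                calc _ = |(-Real.sin φ₁ * Real.sin φ₂
                      + β * (1 - Real.cos φ₁) * (1 - Real.cos φ₂))| := rfl
                  _ ≤ _ := by
                      have : -Real.sin φ₁ * Real.sin φ₂
                          + β * (1 - Real.cos φ₁) * (1 - Real.cos φ₂)
                          = -Real.sin φ₁ * Real.sin φ₂
                          + β * (1 - Real.cos φ₁) * (1 - Real.cos φ₂) := rfl
                      rw [show β * (1 - Real.cos φ₁) * (1 - Real.cos φ₂)
                        = β * (1 - Real.cos φ₁) * (1 - Real.cos φ₂) from rfl]
                      exact htrig
        · exact abs_nonneg _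
        · positivity
    _ = 2 * (2 * Real.sqrt (D 0 0 * D 1 1) * b
        * Real.sqrt ((1 - Real.cos φ₁) * (1 - Real.cos φ₂))) := by ring
end

section
/- For real β with |β| ≤ 1 and real angles φ₁, φ₂, the inequality |−sin φ₁ sin φ₂ + β(1−cos φ₁)(1−cos φ₂)| ≤ 2√((1−cos φ₁)(1−cos φ₂)) holds. -/
theorem stmt19 (β φ₁ φ₂ : ℝ) (hβ : |β| ≤ 1) :
    |-Real.sin φ₁ * Real.sin φ₂ + β * (1 - Real.cos φ₁) * (1 - Real.cos φ₂)|
      ≤ 2 * Real.sqrt ((1 - Real.cos φ₁) * (1 - Real.cos φ₂)) := by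
  set a := 1 - Real.cos φ₁ with ha
  set b := 1 - Real.cos φ₂ with hb
  have ha0 : 0 ≤ a := by have := Real.cos_le_one φ₁; simp [ha]; linarith
  have ha2 : a ≤ 2 := by have := Real.neg_one_le_cos φ₁; simp [ha]; linarith
  have hb0 : 0 ≤ b := by have := Real.cos_le_one φ₂; simp [hb]; linarith
  have hb2 : b ≤ 2 := by have := Real.neg_one_le_cos φ₂; simp [hb]; linarith
  have hs1 : Real.sin φ₁ ^ 2 = a * (2 - a) := by
    have := Real.sin_sq_add_cos_sq φ₁; simp [ha]; nlinarith
  have hs2 : Real.sin φ₂ ^ 2 = b * (2 - b) := by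
    have := Real.sin_sq_add_cos_sq φ₂; simp [hb]; nlinarith
  set s := Real.sqrt (a * b) with hsdef
  have hs0 : 0 ≤ s := Real.sqrt_nonneg _
  have hss : s ^ 2 = a * b := Real.sq_sqrt (mul_nonneg ha0 hb0)
  have hsin : |Real.sin φ₁ * Real.sin φ₂| = Real.sqrt (a * b * ((2 - a) * (2 - b))) := by
    rw [← Real.sqrt_sq_eq_abs]
    congr 1
    rw [mul_pow, hs1, hs2]; ring
  have h1 : |-Real.sin φ₁ * Real.sin φ₂ + β * a * b|
      ≤ |Real.sin φ₁ * Real.sin φ₂| + a * b := by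
    calc |-Real.sin φ₁ * Real.sin φ₂ + β * a * b|
        ≤ |-Real.sin φ₁ * Real.sin φ₂| + |β * a * b| := abs_add_le _ _
      _ ≤ |Real.sin φ₁ * Real.sin φ₂| + a * b := by
          have h2 : |β * a * b| = |β| * (a * b) := by
            rw [abs_mul, abs_mul, abs_of_nonneg ha0, abs_of_nonneg hb0]; ring
          have h3 : |-Real.sin φ₁ * Real.sin φ₂| = |Real.sin φ₁ * Real.sin φ₂| := by
            rw [neg_mul, abs_neg]
          rw [h2, h3]
          nlinarith [mul_nonneg ha0 hb0, abs_nonneg β]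
  have hsle : s ≤ (a + b) / 2 := by
    nlinarith [hss, sq_nonneg (a - b)]
  have h2 : Real.sqrt (a * b * ((2 - a) * (2 - b))) ≤ s * (2 - s) := by
    rw [Real.sqrt_mul (mul_nonneg ha0 hb0)]
    have hkey : Real.sqrt ((2 - a) * (2 - b)) ≤ 2 - s := by
      have h2s : (2 : ℝ) - s = Real.sqrt ((2 - s) ^ 2) := by
        rw [Real.sqrt_sq (by linarith)]
      rw [h2s]
      apply Real.sqrt_le_sqrt
      nlinarith [hss]
    nlinarith [Real.sqrt_nonneg ((2 - a) * (2 - b)), hs0]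
  calc |-Real.sin φ₁ * Real.sin φ₂ + β * a * b|
      ≤ |Real.sin φ₁ * Real.sin φ₂| + a * b := h1
    _ = Real.sqrt (a * b * ((2 - a) * (2 - b))) + a * b := by rw [hsin]
    _ ≤ s * (2 - s) + s ^ 2 := by rw [hss]; linarith [h2]
    _ = 2 * s := by ring
end
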